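/- arXiv:2201.12618 — 4 statements merged into one kernel-verified Lean document; each statement's English description precedes it below -/
import Mathlib

section
/- Let M be a real symmetric n×n matrix and define the communicability distance ξ_{ij} = exp(M)_{ii} + exp(M)_{jj} − 2·exp(M)_{ij}. Then ξ_{ij} > 0 for all i ≠ j, and ξ_{ii} = 0 for all i. -/
open Matrix

/-- For a real symmetric matrix `M`, the communicability distance
`ξ i j = exp(M)_{ii} + exp(M)_{jj} - 2 exp(M)_{ij}` is strictly positive off the diagonal
and vanishes on the diagonal. -/
theorem communicability_distance_pos_off_diag {n : ℕ}
    (M : Matrix (Fin n) (Fin n) ℝ) (hM : Mᵀ = M) :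
    (∀ i j, i ≠ j →
      0 < NormedSpace.exp M i i + NormedSpace.exp M j j - 2 * NormedSpace.exp M i j) ∧
    (∀ i,
      NormedSpace.exp M i i + NormedSpace.exp M i i - 2 * NormedSpace.exp M i i = 0) := by
  refine ⟨fun i j hij => ?_, fun i => by ring⟩
  set B : Matrix (Fin n) (Fin n) ℝ := NormedSpace.exp ((1/2 : ℝ) • M) with hB
  have hhalf : (1/2 : ℝ) • M + (1/2 : ℝ) • M = M := by
    rw [← add_smul]; norm_num
  have hEBB : NormedSpace.exp M = Bᵀ * B := by
    have hBt : Bᵀ = B := by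
      rw [hB, ← Matrix.exp_transpose, transpose_smul, hM]
    rw [hBt, hB, ← Matrix.exp_add_of_commute ((1/2:ℝ)•M) ((1/2:ℝ)•M) (Commute.refl _), hhalf]
  set v : Fin n → ℝ := Pi.single i 1 - Pi.single j 1 with hv
  have hvne : v ≠ 0 := by
    intro h
    have := congr_fun h i
    simp [hv, Pi.single_apply, hij, hij.symm] at this
  have hBv : B *ᵥ v ≠ 0 := by
    have hU : IsUnit B := Matrix.isUnit_exp _
    intro h
    exact hvne ((Matrix.mulVec_injective_iff_isUnit.mpr hU).eq_iff.mp
      (by simpa using h))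
  have hquad : v ⬝ᵥ (NormedSpace.exp M *ᵥ v) =
      NormedSpace.exp M i i + NormedSpace.exp M j j - 2 * NormedSpace.exp M i j := by
    have hsym : NormedSpace.exp M j i = NormedSpace.exp M i j := by
      have : (NormedSpace.exp M)ᵀ = NormedSpace.exp M := by
        rw [← Matrix.exp_transpose, hM]
      exact congr_fun (congr_fun this i) j
    simp [hv, mulVec_sub, dotProduct_sub, sub_dotProduct, mulVec_single,
      single_dotProduct, dotProduct_single, hsym]
    ring
  have hpos : 0 < v ⬝ᵥ (NormedSpace.exp M *ᵥ v) := by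
    rw [hEBB, ← Matrix.mulVec_mulVec, dotProduct_mulVec, vecMul_transpose]
    have h1 : (0:ℝ) ≤ (B *ᵥ v) ⬝ᵥ (B *ᵥ v) :=
      Finset.sum_nonneg fun k _ => mul_self_nonneg _
    rcases h1.lt_or_eq with h | h
    · exact h
    · exact absurd (dotProduct_self_eq_zero.mp h.symm) hBv
  linarith [hquad ▸ hpos]
end

section
/- Let M be a real symmetric n×n matrix and define ξ_{ij} = exp(M)_{ii} + exp(M)_{jj} − 2·exp(M)_{ij}. Then there exist vectors x₁, …, xₙ in Euclidean space ℝⁿ such that ξ_{ij} = ‖x_i − x_j‖² for all i, j. -/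
open Matrix

/-- For a real symmetric matrix `M`, the communicability distance
`ξ i j = exp(M)_{ii} + exp(M)_{jj} - 2 exp(M)_{ij}` is realized as the squared Euclidean
distance between suitable vectors `x₁, …, xₙ` in `ℝⁿ`. -/
theorem communicability_distance_eq_sq_dist {n : ℕ}
    (M : Matrix (Fin n) (Fin n) ℝ) (hM : Mᵀ = M) :
    ∃ x : Fin n → EuclideanSpace ℝ (Fin n), ∀ i j,
      NormedSpace.exp M i i + NormedSpace.exp M j j - 2 * NormedSpace.exp M i j
        = ‖x i - x j‖ ^ 2 := by
  set B : Matrix (Fin n) (Fin n) ℝ := NormedSpace.exp ((1/2 : ℝ) • M) with hB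
  have hBsym : Bᵀ = B := by
    rw [hB, ← Matrix.exp_transpose, Matrix.transpose_smul, hM]
  have hBB : NormedSpace.exp M = B * B := by
    rw [hB, ← Matrix.exp_add_of_commute _ _ (Commute.refl _)]
    congr 1
    rw [← add_smul]
    norm_num
  refine ⟨fun i => (WithLp.equiv 2 _).symm (fun k => B i k), fun i j => ?_⟩
  have hnorm : ‖(WithLp.equiv 2 (Fin n → ℝ)).symm (fun k => B i k)
      - (WithLp.equiv 2 (Fin n → ℝ)).symm (fun k => B j k)‖ ^ 2
      = ∑ k, (B i k - B j k) ^ 2 := by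
    rw [WithLp.equiv_symm_apply, ← WithLp.toLp_sub, EuclideanSpace.norm_eq, Real.sq_sqrt (by positivity)]
    simp [sq_abs]
  rw [hnorm, hBB]
  have hentry : ∀ a b, (B * B) a b = ∑ k, B a k * B b k := by
    intro a b
    simp only [Matrix.mul_apply]
    refine Finset.sum_congr rfl fun k _ => ?_
    rw [show B k b = Bᵀ b k from rfl, hBsym]
  rw [hentry, hentry, hentry]
  rw [← Finset.sum_add_distrib, Finset.mul_sum, ← Finset.sum_sub_distrib]
  refine Finset.sum_congr rfl fun k _ => ?_
  ring
end

section
/- Let M be a real symmetric n×n matrix and define ξ_{ij} = exp(M)_{ii} + exp(M)_{jj} − 2·exp(M)_{ij}. Then the function d(i,j) = √(ξ_{ij}) satisfies the triangle inequality: d(i,k) ≤ d(i,j) + d(j,k) for all indices i, j, k. Together with symmetry and positivity off the diagonal, d is a metric on the index set {1,…,n}. -/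
open Matrix

/-- The communicability distance of a real symmetric matrix. -/
noncomputable def commDist {n : ℕ} (M : Matrix (Fin n) (Fin n) ℝ) (i j : Fin n) : ℝ :=
  Real.sqrt (NormedSpace.exp M i i + NormedSpace.exp M j j - 2 * NormedSpace.exp M i j)

/-- For a real symmetric matrix `M`, the function `d(i,j) = √(ξ_{ij})` satisfies the triangle
inequality; together with symmetry, positivity off the diagonal and vanishing on the diagonal,
`d` is a metric on the index set. -/
theorem commDist_is_metric {n : ℕ} (M : Matrix (Fin n) (Fin n) ℝ) (hM : Mᵀ = M) :
    (∀ i j k, commDist M i k ≤ commDist M i j + commDist M j k) ∧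
    (∀ i j, commDist M i j = commDist M j i) ∧
    (∀ i j, i ≠ j → 0 < commDist M i j) ∧
    (∀ i, commDist M i i = 0) := by
  -- the "square root" matrix A = exp(M/2)
  set A : Matrix (Fin n) (Fin n) ℝ := NormedSpace.exp ((1/2 : ℝ) • M) with hA
  have hAT : Aᵀ = A := by
    rw [hA, ← Matrix.exp_transpose, transpose_smul, hM]
  have hAA : A * A = NormedSpace.exp M := by
    rw [hA, ← Matrix.exp_add_of_commute _ _ (Commute.refl _), ← add_smul]
    norm_num
  -- the row map into Euclidean space
  set f : Fin n → EuclideanSpace ℝ (Fin n) := fun i => WithLp.toLp 2 (A i) with hf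
  have hinner : ∀ i j, NormedSpace.exp M i j = inner ℝ (f i) (f j) := by
    intro i j
    rw [← hAA]
    simp only [Matrix.mul_apply, PiLp.inner_apply, RCLike.inner_apply, conj_trivial, hf, PiLp.toLp_apply]
    refine Finset.sum_congr rfl fun k _ => ?_
    have : A k j = A j k := congrFun (congrFun hAT j) k
    rw [this, mul_comm]
  have hdist : ∀ i j, commDist M i j = dist (f i) (f j) := by
    intro i j
    have h1 : NormedSpace.exp M i i + NormedSpace.exp M j j -
        2 * NormedSpace.exp M i j = ‖f i - f j‖ ^ 2 := by
      rw [hinner, hinner, hinner, @norm_sub_sq_real, real_inner_self_eq_norm_sq,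
        real_inner_self_eq_norm_sq]
      ring
    rw [commDist, h1, Real.sqrt_sq (norm_nonneg _), dist_eq_norm]
  refine ⟨fun i j k => ?_, fun i j => ?_, fun i j hij => ?_, fun i => ?_⟩
  · rw [hdist, hdist, hdist]; exact dist_triangle _ _ _
  · rw [hdist, hdist]; exact dist_comm _ _
  · rw [hdist]
    refine dist_pos.mpr fun hfe' => hij ?_
    have hfe : (A i : Fin n → ℝ) = A j := congrArg WithLp.ofLp hfe'
    -- A is invertible, so distinct rows
    obtain ⟨u, hu⟩ := Matrix.isUnit_exp ((1/2 : ℝ) • M)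
    have hAB : A * (↑u⁻¹ : Matrix (Fin n) (Fin n) ℝ) = 1 := by
      rw [hA, ← hu]; exact u.mul_inv
    have h1 : ∀ c, (1 : Matrix (Fin n) (Fin n) ℝ) i c = (1 : Matrix (Fin n) (Fin n) ℝ) j c := by
      intro c
      rw [← hAB]
      simp only [Matrix.mul_apply]
      exact Finset.sum_congr rfl fun l _ => by rw [congrFun hfe l]
    by_contra hne
    have := h1 i
    rw [Matrix.one_apply_eq, Matrix.one_apply_ne (Ne.symm hij)] at this
    exact one_ne_zero this
  · rw [hdist]; exact dist_self _
end

section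
/- Entrywise monotonicity of the communicability matrix in the inter-layer intensity: if all entries of A and of C are nonnegative, then for all indices i, j and all real numbers 0 ≤ ω ≤ ω′, one has exp(A + ω·C)_{ij} ≤ exp(A + ω′·C)_{ij}; in particular, for ω ∈ [0,1], exp(A + ω·C)_{ij} ≤ exp(A + C)_{ij}. -/
open Matrix

lemma pow_entry_nonneg_and_mono {N : ℕ} (M M' : Matrix (Fin N) (Fin N) ℝ)
    (hM : ∀ i j, 0 ≤ M i j) (h : ∀ i j, M i j ≤ M' i j) (n : ℕ) :
    (∀ i j, 0 ≤ (M ^ n) i j) ∧ (∀ i j, (M ^ n) i j ≤ (M' ^ n) i j) := by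
  induction n with
  | zero =>
      refine ⟨fun i j => ?_, fun i j => ?_⟩ <;> simp [pow_zero, Matrix.one_apply] <;>
        split_ifs <;> norm_num
  | succ n ih =>
      refine ⟨fun i j => ?_, fun i j => ?_⟩
      · rw [pow_succ, Matrix.mul_apply]
        exact Finset.sum_nonneg fun k _ => mul_nonneg (ih.1 i k) (hM k j)
      · rw [pow_succ, pow_succ, Matrix.mul_apply, Matrix.mul_apply]
        exact Finset.sum_le_sum fun k _ =>
          mul_le_mul (ih.2 i k) (h k j) (hM k j) ((ih.1 i k).trans (ih.2 i k))

lemma exp_entry_le {N : ℕ} (M M' : Matrix (Fin N) (Fin N) ℝ)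
    (hM : ∀ i j, 0 ≤ M i j) (h : ∀ i j, M i j ≤ M' i j) (i j : Fin N) :
    NormedSpace.exp M i j ≤ NormedSpace.exp M' i j := by
  letI : NormedRing (Matrix (Fin N) (Fin N) ℝ) := Matrix.linftyOpNormedRing
  letI : NormedAlgebra ℝ (Matrix (Fin N) (Fin N) ℝ) := Matrix.linftyOpNormedAlgebra
  have hs : ∀ X : Matrix (Fin N) (Fin N) ℝ,
      Summable fun n : ℕ => (((n.factorial : ℝ))⁻¹ • X ^ n) i j := by
    intro X
    have h0 := NormedSpace.expSeries_summable' (𝕂 := ℝ) X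
    exact Pi.summable.mp (Pi.summable.mp h0 i) j
  simp only [NormedSpace.exp_eq_tsum ℝ]
  have h1 : ∀ (X : Matrix (Fin N) (Fin N) ℝ),
      (∑' n : ℕ, ((n.factorial : ℝ))⁻¹ • X ^ n) i j = ∑' n : ℕ, (((n.factorial : ℝ))⁻¹ • X ^ n) i j := by
    intro X
    have h0 := NormedSpace.expSeries_summable' (𝕂 := ℝ) X
    exact (congrFun (tsum_apply h0) j).trans (tsum_apply (Pi.summable.mp h0 i))
  rw [h1, h1]
  refine Summable.tsum_le_tsum (fun n => ?_) (hs M) (hs M')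
  simp only [Matrix.smul_apply, smul_eq_mul]
  exact mul_le_mul_of_nonneg_left ((pow_entry_nonneg_and_mono M M' hM h n).2 i j)
    (by positivity)

/-- Entrywise monotonicity of the communicability matrix in the inter-layer intensity: if `A` and
`C` have nonnegative entries, then `exp(A + ω·C)_{ij}` is monotone in `ω ≥ 0`; in particular,
for `ω ∈ [0,1]`, `exp(A + ω·C)_{ij} ≤ exp(A + C)_{ij}`. -/
theorem exp_entry_monotone {N : ℕ} (hN : 1 ≤ N) (A C : Matrix (Fin N) (Fin N) ℝ)
    (hA : ∀ i j, 0 ≤ A i j) (hC : ∀ i j, 0 ≤ C i j) :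
    (∀ ω ω' : ℝ, 0 ≤ ω → ω ≤ ω' → ∀ i j,
        NormedSpace.exp (A + ω • C) i j ≤ NormedSpace.exp (A + ω' • C) i j) ∧
    (∀ ω ∈ Set.Icc (0 : ℝ) 1, ∀ i j,
        NormedSpace.exp (A + ω • C) i j ≤ NormedSpace.exp (A + C) i j) := by
  have key : ∀ ω ω' : ℝ, 0 ≤ ω → ω ≤ ω' → ∀ i j,
      NormedSpace.exp (A + ω • C) i j ≤ NormedSpace.exp (A + ω' • C) i j := by
    intro ω ω' hω hωω' i j
    refine exp_entry_le _ _ (fun i j => ?_) (fun i j => ?_) i j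
    · simp only [Matrix.add_apply, Matrix.smul_apply, smul_eq_mul]
      exact add_nonneg (hA i j) (mul_nonneg hω (hC i j))
    · simp only [Matrix.add_apply, Matrix.smul_apply, smul_eq_mul]
      exact add_le_add le_rfl (mul_le_mul_of_nonneg_right hωω' (hC i j))
  refine ⟨key, fun ω hω i j => ?_⟩
  have := key ω 1 hω.1 hω.2 i j
  rwa [one_smul] at this
end
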